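/- Let X be a finite topological space, F an abelian data on X, and G an abelian group. (1) For every closed subset Z ⊆ X there is a natural isomorphism Hom(F, G_Z) ≅ Hom(L(Z,F), G). (2) For every open subset U ⊆ X there is a natural isomorphism Hom(G_U, F) ≅ Hom(G, Γ(U,F)). Here the left-hand Homs are morphisms of abelian data and the right-hand Homs are group homomorphisms. -/

import Mathlib

open CategoryTheory Topology CategoryTheory.Limits

/-! Core definitions: abelian data on a finite topological space. -/

abbrev AbData (X : Type) [TopologicalSpace X] : Type 1 := Specialization X ⥤ AddCommGrpCat.{0}
abbrev pt {X : Type} [TopologicalSpace X] (x : X) : Specialization X := Specialization.toEquiv x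

section core
variable {X : Type} [TopologicalSpace X]
abbrev stalk (F : AbData X) (x : X) : Type := F.obj (pt x)

lemma naturality_apply {F G : AbData X} (φ : F ⟶ G) {p q : Specialization X} (h : p ⟶ q)
    (a : F.obj p) : G.map h (φ.app p a) = φ.app q (F.map h a) := by
  have := congrArg (fun (f : F.obj p ⟶ G.obj q) => f a) (φ.naturality h)
  simp only [CategoryTheory.comp_apply] at this
  exact this.symm

/-- Compatible families: the sections of an abelian data over the whole space. -/
def compatSections (F : AbData X) : AddSubgroup (∀ x : X, F.obj (pt x)) where
  carrier := {u | ∀ (x y : X) (h : pt x ≤ pt y), F.map (homOfLE h) (u x) = u y}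
  zero_mem' := by intro x y h; simp
  add_mem' := by intro u v hu hv x y h; simp [map_add, hu x y h, hv x y h]
  neg_mem' := by intro u hu x y h; simp [hu x y h]

/-- The sections functor `Γ(X,-)`. -/
noncomputable def secFunctor (X : Type) [TopologicalSpace X] : AbData X ⥤ AddCommGrpCat.{0} where
  obj F := AddCommGrpCat.of (compatSections F)
  map {F G} φ :=
    AddCommGrpCat.ofHom
    { toFun := fun u => ⟨fun x => φ.app (pt x) (u.1 x), by
        intro x y h
        rw [naturality_apply φ (homOfLE h) (u.1 x), u.2 x y h]⟩
      map_zero' := by apply Subtype.ext; funext x; simp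
      map_add' := by intro u v; apply Subtype.ext; funext x; simp }
  map_id := by intro F; apply AddCommGrpCat.hom_ext; apply AddMonoidHom.ext; intro u; rfl
  map_comp := by intro F G H φ ψ; apply AddCommGrpCat.hom_ext; apply AddMonoidHom.ext; intro u; rfl

instance (X : Type) [TopologicalSpace X] : (secFunctor X).Additive where
  map_add := by
    intro F G φ ψ
    apply AddCommGrpCat.hom_ext; apply AddMonoidHom.ext; intro u; apply Subtype.ext; funext x
    rfl

noncomputable def cosecOf (F : AbData X) (x : X) : stalk F x →+ DirectSum X (stalk F) :=
  letI := Classical.decEq X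
  DirectSum.of (stalk F) x

/-- The relations defining cosections (the colimit presentation). -/
noncomputable def cosecRel (F : AbData X) : AddSubgroup (DirectSum X (stalk F)) :=
  AddSubgroup.closure {w | ∃ (x y : X) (h : pt x ≤ pt y) (a : stalk F x),
    w = cosecOf F y (F.map (homOfLE h) a) - cosecOf F x a}

/-- Cosections of `F` over the whole space: `L(X,F)`, presented as the quotient of the direct
sum `⊕ₓ F_x` by the relations `r_{xy}(a) - a`. -/
noncomputable def cosecGrp (F : AbData X) : AddCommGrpCat.{0} :=
  AddCommGrpCat.of (DirectSum X (stalk F) ⧸ cosecRel F)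

noncomputable def cosecMk (F : AbData X) (x : X) : stalk F x →+ cosecGrp F :=
  (QuotientAddGroup.mk' (cosecRel F)).comp (cosecOf F x)

lemma cosecHom_ext {F : AbData X} {H : Type} [AddCommGroup H] {f g : cosecGrp F →+ H}
    (h : ∀ (x : X) (a : stalk F x), f (cosecMk F x a) = g (cosecMk F x a)) : f = g := by
  letI := Classical.decEq X
  exact QuotientAddGroup.addMonoidHom_ext _ (DirectSum.addHom_ext fun x a => h x a)

noncomputable def cosecMapAux {F G : AbData X} (φ : F ⟶ G) :
    DirectSum X (stalk F) →+ cosecGrp G :=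
  letI := Classical.decEq X
  DirectSum.toAddMonoid (fun x => (cosecMk G x).comp (φ.app (pt x)).hom)

lemma cosecMapAux_of {F G : AbData X} (φ : F ⟶ G) (x : X) (a : stalk F x) :
    cosecMapAux φ (cosecOf F x a) = cosecMk G x (φ.app (pt x) a) := by
  letI := Classical.decEq X
  simp [cosecMapAux, cosecOf, DirectSum.toAddMonoid_of]

lemma cosecRel_le_ker {F G : AbData X} (φ : F ⟶ G) : cosecRel F ≤ (cosecMapAux φ).ker := by
  rw [cosecRel, AddSubgroup.closure_le]
  rintro w ⟨x, y, h, a, rfl⟩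
  have : (cosecMapAux φ) (cosecOf F y ((F.map (homOfLE h)) a) - cosecOf F x a) = 0 := by
    rw [map_sub, cosecMapAux_of, cosecMapAux_of, ← naturality_apply φ (homOfLE h) a]
    show (QuotientAddGroup.mk' (cosecRel G)) (cosecOf G y (G.map (homOfLE h) (φ.app (pt x) a)))
      - (QuotientAddGroup.mk' (cosecRel G)) (cosecOf G x (φ.app (pt x) a)) = 0
    rw [← map_sub]
    exact (QuotientAddGroup.eq_zero_iff _).mpr
      (AddSubgroup.subset_closure ⟨x, y, h, φ.app (pt x) a, rfl⟩)
  exact this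

noncomputable def cosecMap {F G : AbData X} (φ : F ⟶ G) : cosecGrp F →+ cosecGrp G :=
  QuotientAddGroup.lift (cosecRel F) (cosecMapAux φ) (cosecRel_le_ker φ)

lemma cosecMap_mk {F G : AbData X} (φ : F ⟶ G) (x : X) (a : stalk F x) :
    cosecMap φ (cosecMk F x a) = cosecMk G x (φ.app (pt x) a) := cosecMapAux_of φ x a

/-- The cosections functor `L(X,-)`. -/
noncomputable def cosecFunctor (X : Type) [TopologicalSpace X] : AbData X ⥤ AddCommGrpCat.{0} where
  obj F := cosecGrp F
  map φ := AddCommGrpCat.ofHom (cosecMap φ)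
  map_id F := by
    refine AddCommGrpCat.hom_ext (cosecHom_ext fun x a => ?_)
    show cosecMap (𝟙 F) (cosecMk F x a) = cosecMk F x a
    rw [cosecMap_mk]; rfl
  map_comp φ ψ := by
    refine AddCommGrpCat.hom_ext (cosecHom_ext fun x a => ?_)
    show cosecMap (φ ≫ ψ) (cosecMk _ x a) = cosecMap ψ (cosecMap φ (cosecMk _ x a))
    rw [cosecMap_mk, cosecMap_mk, cosecMap_mk]; rfl

instance (X : Type) [TopologicalSpace X] : (cosecFunctor X).Additive where
  map_add := by
    intro F G φ ψ
    refine AddCommGrpCat.hom_ext (cosecHom_ext fun x a => ?_)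
    show cosecMap (φ + ψ) (cosecMk F x a) = (cosecMap φ + cosecMap ψ) (cosecMk F x a)
    rw [AddMonoidHom.add_apply, cosecMap_mk, cosecMap_mk, cosecMap_mk]
    show cosecMk G x ((φ.app (pt x) + ψ.app (pt x)) a) = _
    exact map_add (cosecMk G x) _ _
end core

section restriction
variable {X : Type} [TopologicalSpace X]

/-- The inclusion of a subspace, as a functor between specialization preorders. -/
def inc (S : Set X) : Specialization ↥S ⥤ Specialization X :=
  (Specialization.map ⟨(Subtype.val : S → X), continuous_subtype_val⟩).monotone.functor

/-- Restriction of abelian data to a subspace. -/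
def restr (S : Set X) : AbData X ⥤ AbData ↥S := (Functor.whiskeringLeft _ _ _).obj (inc S)

lemma subtype_pt_le_iff {S : Set X} (a b : ↥S) : pt a ≤ pt b ↔ pt (a : X) ≤ pt (b : X) := by
  rw [Specialization.toEquiv_le_toEquiv, Specialization.toEquiv_le_toEquiv]
  exact (subtype_specializes_iff b a).trans Iff.rfl

lemma data_map_eq (F : AbData X) {p q : Specialization X} (h h' : p ⟶ q) : F.map h = F.map h' := by
  congr 1
  apply Subsingleton.elim

/-- Sections of `F` over the subspace `S`: `Γ(S,F)`. -/
noncomputable def secGrpOn (S : Set X) (F : AbData X) : AddCommGrpCat.{0} :=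
  (secFunctor ↥S).obj ((restr S).obj F)

/-- Cosections of `F` over the subspace `S`: `L(S,F)`. -/
noncomputable def cosecGrpOn (S : Set X) (F : AbData X) : AddCommGrpCat.{0} :=
  (cosecFunctor ↥S).obj ((restr S).obj F)

/-- Restriction of sections along an inclusion of subspaces `T ⊆ S`. -/
noncomputable def secResOn (F : AbData X) {S T : Set X} (hTS : T ⊆ S) :
    secGrpOn S F →+ secGrpOn T F where
  toFun u := (⟨fun x => u.1 ⟨x.1, hTS x.2⟩, by
    intro x y h
    have hS : pt (⟨x.1, hTS x.2⟩ : ↥S) ≤ pt (⟨y.1, hTS y.2⟩ : ↥S) := by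
      rw [subtype_pt_le_iff]
      exact (subtype_pt_le_iff x y).mp h
    have hu := u.2 ⟨x.1, hTS x.2⟩ ⟨y.1, hTS y.2⟩ hS
    have heq : ((restr T).obj F).map (homOfLE h) = ((restr S).obj F).map (homOfLE hS) :=
      data_map_eq F _ _
    rw [heq]
    exact hu⟩ : compatSections ((restr T).obj F))
  map_zero' := rfl
  map_add' u v := rfl

noncomputable def cosecExtAux (F : AbData X) {S T : Set X} (hST : S ⊆ T) :
    DirectSum ↥S (stalk ((restr S).obj F)) →+ cosecGrp ((restr T).obj F) :=
  letI := Classical.decEq ↥S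
  DirectSum.toAddMonoid (fun x => cosecMk ((restr T).obj F) ⟨x.1, hST x.2⟩)

lemma cosecExtAux_of (F : AbData X) {S T : Set X} (hST : S ⊆ T) (x : ↥S)
    (a : stalk ((restr S).obj F) x) :
    cosecExtAux F hST (cosecOf ((restr S).obj F) x a)
      = cosecMk ((restr T).obj F) ⟨x.1, hST x.2⟩ a := by
  letI := Classical.decEq ↥S
  simp only [cosecExtAux, cosecOf, DirectSum.toAddMonoid_of]
  exact DirectSum.toAddMonoid_of _ _ _

/-- Extension of cosections along an inclusion of subspaces `S ⊆ T`. -/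
noncomputable def cosecExtOn (F : AbData X) {S T : Set X} (hST : S ⊆ T) :
    cosecGrp ((restr S).obj F) →+ cosecGrp ((restr T).obj F) := by
  refine QuotientAddGroup.lift _ (cosecExtAux F hST) ?_
  rw [cosecRel, AddSubgroup.closure_le]
  rintro w ⟨x, y, h, a, rfl⟩
  have hT : pt (⟨x.1, hST x.2⟩ : ↥T) ≤ pt (⟨y.1, hST y.2⟩ : ↥T) := by
    rw [subtype_pt_le_iff]; exact (subtype_pt_le_iff x y).mp h
  have heq : ((restr S).obj F).map (homOfLE h) = ((restr T).obj F).map (homOfLE hT) :=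
    data_map_eq F _ _
  rw [SetLike.mem_coe, AddMonoidHom.mem_ker, map_sub, heq, cosecExtAux_of, cosecExtAux_of]
  show (QuotientAddGroup.mk' (cosecRel _)) (_ - _) = 0
  exact (QuotientAddGroup.eq_zero_iff _).mpr
    (AddSubgroup.subset_closure ⟨⟨x.1, hST x.2⟩, ⟨y.1, hST y.2⟩, hT, a, rfl⟩)

lemma cosecExtOn_mk (F : AbData X) {S T : Set X} (hST : S ⊆ T) (x : ↥S)
    (a : stalk ((restr S).obj F) x) :
    cosecExtOn F hST (cosecMk ((restr S).obj F) x a)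
      = cosecMk ((restr T).obj F) ⟨x.1, hST x.2⟩ a := cosecExtAux_of F hST x a

end restriction

section spaces
variable {X : Type} [TopologicalSpace X]

/-- The minimal open subset containing a point (of a finite space). -/
def minOpen (x : X) : Set X := ⋂₀ {U : Set X | IsOpen U ∧ x ∈ U}

lemma isOpen_minOpen [Finite X] (x : X) : IsOpen (minOpen x) :=
  Set.Finite.isOpen_sInter (Set.toFinite _) (fun _ hU => hU.1)

lemma mem_minOpen_self (x : X) : x ∈ minOpen x := fun _ hU => hU.2

lemma mem_minOpen_iff {x z : X} : z ∈ minOpen x ↔ pt x ≤ pt z := by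
  rw [Specialization.toEquiv_le_toEquiv, specializes_iff_forall_open]
  constructor
  · intro hz s hs hx
    exact hz s ⟨hs, hx⟩
  · intro h U hU
    exact h U hU.1 hU.2

lemma mem_closure_iff_pt_le {x z : X} : z ∈ closure ({x} : Set X) ↔ pt z ≤ pt x := by
  rw [Specialization.toEquiv_le_toEquiv, specializes_iff_mem_closure]

lemma minOpen_anti {y y' : X} (h : pt y ≤ pt y') : minOpen y' ⊆ minOpen y := by
  intro z hz
  rw [mem_minOpen_iff] at hz ⊢
  exact le_trans h hz

lemma closure_singleton_mono {y y' : X} (h : pt y ≤ pt y') :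
    closure ({y} : Set X) ⊆ closure ({y'} : Set X) := by
  intro z hz
  rw [mem_closure_iff_pt_le] at hz ⊢
  exact le_trans hz h
end spaces

section directimages
variable {X Y : Type} [TopologicalSpace X] [TopologicalSpace Y]

/-- Restriction of global sections to sections over a subspace. -/
noncomputable def secResToSub (F : AbData X) (S : Set X) :
    (secFunctor X).obj F →+ secGrpOn S F where
  toFun u := (⟨fun x => u.1 x.1, by
    intro x y h
    have hX : pt (x : X) ≤ pt (y : X) := (subtype_pt_le_iff x y).mp h
    have hu := u.2 x.1 y.1 hX
    have heq : ((restr S).obj F).map (homOfLE h) = F.map (homOfLE hX) := data_map_eq F _ _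
    rw [heq]
    exact hu⟩ : compatSections ((restr S).obj F))
  map_zero' := rfl
  map_add' u v := rfl

noncomputable def cosecFromSubAux (F : AbData X) (S : Set X) :
    DirectSum ↥S (stalk ((restr S).obj F)) →+ cosecGrp F :=
  letI := Classical.decEq ↥S
  DirectSum.toAddMonoid (fun x => cosecMk F x.1)

lemma cosecFromSubAux_of (F : AbData X) (S : Set X) (x : ↥S)
    (a : stalk ((restr S).obj F) x) :
    cosecFromSubAux F S (cosecOf ((restr S).obj F) x a) = cosecMk F x.1 a := by
  letI := Classical.decEq ↥S
  simp only [cosecFromSubAux, cosecOf, DirectSum.toAddMonoid_of]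
  exact DirectSum.toAddMonoid_of _ _ _

/-- Extension of cosections over a subspace to global cosections. -/
noncomputable def cosecExtFromSub (F : AbData X) (S : Set X) :
    cosecGrp ((restr S).obj F) →+ cosecGrp F := by
  refine QuotientAddGroup.lift _ (cosecFromSubAux F S) ?_
  rw [cosecRel, AddSubgroup.closure_le]
  rintro w ⟨x, y, h, a, rfl⟩
  have hX : pt (x : X) ≤ pt (y : X) := (subtype_pt_le_iff x y).mp h
  have heq : ((restr S).obj F).map (homOfLE h) = F.map (homOfLE hX) := data_map_eq F _ _
  rw [SetLike.mem_coe, AddMonoidHom.mem_ker, map_sub, heq, cosecFromSubAux_of,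
    cosecFromSubAux_of]
  show (QuotientAddGroup.mk' (cosecRel _)) (_ - _) = 0
  exact (QuotientAddGroup.eq_zero_iff _).mpr
    (AddSubgroup.subset_closure ⟨x.1, y.1, hX, a, rfl⟩)

lemma cosecExtFromSub_mk (F : AbData X) (S : Set X) (x : ↥S)
    (a : stalk ((restr S).obj F) x) :
    cosecExtFromSub F S (cosecMk ((restr S).obj F) x a) = cosecMk F x.1 a :=
  cosecFromSubAux_of F S x a

/-- An abelian data is flasque if all restrictions to open subsets are surjective. -/
def Flasque (F : AbData X) : Prop :=
  ∀ U : Set X, IsOpen U → Function.Surjective (secResToSub F U)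

/-- An abelian data is coflasque if all extensions from closed subsets are injective. -/
def Coflasque (F : AbData X) : Prop :=
  ∀ C : Set X, IsClosed C → Function.Injective (cosecExtFromSub F C)

/-- The inverse image functor `f⁻¹`. -/
def invIm (f : C(X, Y)) : AbData Y ⥤ AbData X :=
  (Functor.whiskeringLeft _ _ _).obj (Specialization.map f).monotone.functor

/-- The direct image functor `f_*`, defined stalkwise by `(f_* F)_y = Γ(f⁻¹(U_y), F)`. -/
noncomputable def pushforward (f : C(X, Y)) : AbData X ⥤ AbData Y where
  obj F :=
    { obj := fun y => secGrpOn (f ⁻¹' minOpen (Specialization.ofEquiv y)) F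
      map := fun {y y'} h => AddCommGrpCat.ofHom (secResOn F (Set.preimage_mono
        (minOpen_anti (y := Specialization.ofEquiv y) (y' := Specialization.ofEquiv y') (leOfHom h))))
      map_id := fun y => by
        apply AddCommGrpCat.hom_ext; apply AddMonoidHom.ext; intro u; apply Subtype.ext; rfl
      map_comp := fun h1 h2 => by
        apply AddCommGrpCat.hom_ext; apply AddMonoidHom.ext; intro u; apply Subtype.ext; rfl }
  map {F G} φ :=
    { app := fun y => (secFunctor _).map ((restr _).map φ)
      naturality := fun y y' h => by
        apply AddCommGrpCat.hom_ext; apply AddMonoidHom.ext; intro u; apply Subtype.ext; rfl }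
  map_id F := by
    apply NatTrans.ext; funext y; apply AddCommGrpCat.hom_ext; apply AddMonoidHom.ext; intro u
    apply Subtype.ext; rfl
  map_comp φ ψ := by
    apply NatTrans.ext; funext y; apply AddCommGrpCat.hom_ext; apply AddMonoidHom.ext; intro u
    apply Subtype.ext; rfl

lemma cosecExtOn_refl (F : AbData X) {S : Set X} (h : S ⊆ S) :
    cosecExtOn F h = AddMonoidHom.id (cosecGrp ((restr S).obj F)) := by
  refine cosecHom_ext fun x a => ?_
  rw [cosecExtOn_mk]
  rfl

lemma cosecExtOn_trans (F : AbData X) {S T V : Set X} (h1 : S ⊆ T) (h2 : T ⊆ V)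
    (h3 : S ⊆ V) :
    cosecExtOn F h3 = (cosecExtOn F h2).comp (cosecExtOn F h1) := by
  refine cosecHom_ext fun x a => ?_
  rw [cosecExtOn_mk, AddMonoidHom.comp_apply, cosecExtOn_mk]
  exact (cosecExtOn_mk F h2 (⟨x.1, h1 x.2⟩ : ↥T) a).symm

lemma cosecExtOn_natural {F G : AbData X} (φ : F ⟶ G) {S T : Set X} (h : S ⊆ T) :
    (cosecMap ((restr T).map φ)).comp (cosecExtOn F h)
      = (cosecExtOn G h).comp (cosecMap ((restr S).map φ)) := by
  refine cosecHom_ext fun x a => ?_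
  rw [AddMonoidHom.comp_apply, AddMonoidHom.comp_apply, cosecExtOn_mk, cosecMap_mk,
    cosecExtOn_mk]
  exact cosecMap_mk ((restr T).map φ) (⟨x.1, h x.2⟩ : ↥T) a

/-- The stalk of `f_! F`: cosections over `f⁻¹(C_y)`. -/
noncomputable def shriekObj (f : C(X, Y)) (F : AbData X) : AbData Y where
  obj y := cosecGrpOn (f ⁻¹' closure {Specialization.ofEquiv y}) F
  map {y y'} h := AddCommGrpCat.ofHom (cosecExtOn F (Set.preimage_mono
    (closure_singleton_mono (y := Specialization.ofEquiv y) (y' := Specialization.ofEquiv y')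
      (leOfHom h))))
  map_id y := AddCommGrpCat.hom_ext (cosecExtOn_refl F _)
  map_comp {y₁ y₂ y₃} h1 h2 := AddCommGrpCat.hom_ext (cosecExtOn_trans F _ _ _)

/-- The codirect image functor `f_!`, defined stalkwise by `(f_! F)_y = L(f⁻¹(C_y), F)`. -/
noncomputable def shriek (f : C(X, Y)) : AbData X ⥤ AbData Y where
  obj F := shriekObj f F
  map {F G} φ :=
    { app := fun y => (cosecFunctor _).map ((restr _).map φ)
      naturality := fun y y' h => AddCommGrpCat.hom_ext (cosecExtOn_natural φ _) }
  map_id F := by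
    refine NatTrans.ext (funext fun y => ?_)
    show (cosecFunctor _).map ((restr _).map (𝟙 F)) = _
    rw [CategoryTheory.Functor.map_id, CategoryTheory.Functor.map_id]
    rfl
  map_comp φ ψ := by
    refine NatTrans.ext (funext fun y => ?_)
    show (cosecFunctor _).map ((restr _).map (φ ≫ ψ)) = _
    rw [CategoryTheory.Functor.map_comp, CategoryTheory.Functor.map_comp]
    rfl
end directimages

instance pushforwardAdditive {X Y : Type} [TopologicalSpace X] [TopologicalSpace Y]
    (f : C(X, Y)) : (pushforward f).Additive where
  map_add := by
    intro F G φ ψ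
    refine NatTrans.ext (funext fun y => ?_)
    apply AddCommGrpCat.hom_ext; apply AddMonoidHom.ext; intro u; apply Subtype.ext; funext x
    rfl

instance shriekAdditive {X Y : Type} [TopologicalSpace X] [TopologicalSpace Y]
    (f : C(X, Y)) : (shriek f).Additive where
  map_add := by
    intro F G φ ψ
    refine NatTrans.ext (funext fun y => ?_)
    refine AddCommGrpCat.hom_ext (cosecHom_ext fun x a => ?_)
    show cosecMap ((restr _).map (φ + ψ)) (cosecMk _ x a)
      = cosecMap ((restr _).map φ) (cosecMk _ x a) + cosecMap ((restr _).map ψ) (cosecMk _ x a)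
    rw [cosecMap_mk, cosecMap_mk, cosecMap_mk]
    exact map_add _ _ _


section supp
open CategoryTheory
variable {X : Type} [TopologicalSpace X]

lemma mem_of_isLocallyClosed {S : Set X} (hS : IsLocallyClosed S) {p q r : X}
    (h1 : q ⤳ p) (h2 : r ⤳ q) (hp : p ∈ S) (hr : r ∈ S) : q ∈ S := by
  obtain ⟨U, Z, hU, hZ, rfl⟩ := hS
  exact ⟨h1.mem_open hU hp.1, h2.mem_closed hZ hr.2⟩

open Classical in
/-- The abelian data `G_S` supported on a locally closed subset `S`: the stalk at `p` is `G`
if `p ∈ S` and `0` otherwise; the transition maps are the identity between points of `S` and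
zero otherwise. -/
noncomputable def suppData (G : AddCommGrpCat.{0}) (S : Set X) (hS : IsLocallyClosed S) :
    AbData X where
  obj p := if (Specialization.ofEquiv p : X) ∈ S then G else AddCommGrpCat.of PUnit
  map {p q} h :=
    if hp : (Specialization.ofEquiv p : X) ∈ S then
      if hq : (Specialization.ofEquiv q : X) ∈ S then
        eqToHom (if_pos hp) ≫ eqToHom (if_pos hq).symm
      else 0
    else 0
  map_id p := by
    by_cases hp : (Specialization.ofEquiv p : X) ∈ S
    · simp [hp]
    · have hsub : Subsingleton
          ((if (Specialization.ofEquiv p : X) ∈ S then G else AddCommGrpCat.of PUnit) : AddCommGrpCat) := by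
        rw [if_neg hp]
        exact inferInstanceAs (Subsingleton PUnit)
      simp only [dif_neg hp]
      exact AddCommGrpCat.hom_ext (AddMonoidHom.ext fun a => Subsingleton.elim _ _)
  map_comp {p q r} h1 h2 := by
    have hmid : (Specialization.ofEquiv p : X) ∈ S → (Specialization.ofEquiv r : X) ∈ S →
        (Specialization.ofEquiv q : X) ∈ S := fun hp hr =>
      mem_of_isLocallyClosed hS (Specialization.ofEquiv_specializes_ofEquiv.mpr (leOfHom h1))
        (Specialization.ofEquiv_specializes_ofEquiv.mpr (leOfHom h2)) hp hr
    by_cases hp : (Specialization.ofEquiv p : X) ∈ S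
    · by_cases hr : (Specialization.ofEquiv r : X) ∈ S
      · have hq := hmid hp hr
        simp [hp, hq, hr]
      · by_cases hq : (Specialization.ofEquiv q : X) ∈ S
        · simp [hp, hq, hr]
        · simp [hp, hq, hr]
    · simp [hp]

/-- The map induced by `φ : F ⟶ F'` on sections over a subspace. -/
noncomputable def secMapOn (U : Set X) {F F' : AbData X} (φ : F ⟶ F') :
    secGrpOn U F →+ secGrpOn U F' :=
  ((secFunctor ↥U).map ((restr U).map φ)).hom

/-- The map induced by `φ : F ⟶ F'` on cosections over a subspace. -/
noncomputable def cosecMapOn (S : Set X) {F F' : AbData X} (φ : F ⟶ F') :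
    cosecGrpOn S F →+ cosecGrpOn S F' :=
  cosecMap ((restr S).map φ)
end supp

section proof15
open CategoryTheory Classical
variable {X : Type} [TopologicalSpace X]

lemma suppData_obj_eq (G : AddCommGrpCat.{0}) {S : Set X} (hS : IsLocallyClosed S)
    (p : Specialization X) :
    (suppData G S hS).obj p
      = (if (Specialization.ofEquiv p : X) ∈ S then G else AddCommGrpCat.of PUnit) := rfl

noncomputable def sIn (G : AddCommGrpCat.{0}) {S : Set X} (hS : IsLocallyClosed S)
    (p : Specialization X) (hp : (Specialization.ofEquiv p : X) ∈ S) :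
    G ⟶ (suppData G S hS).obj p :=
  eqToHom (by rw [suppData_obj_eq, if_pos hp])

noncomputable def sOut (G : AddCommGrpCat.{0}) {S : Set X} (hS : IsLocallyClosed S)
    (p : Specialization X) (hp : (Specialization.ofEquiv p : X) ∈ S) :
    (suppData G S hS).obj p ⟶ G :=
  eqToHom (by rw [suppData_obj_eq, if_pos hp])

lemma sOut_sIn (G : AddCommGrpCat.{0}) {S : Set X} (hS : IsLocallyClosed S)
    {p : Specialization X} (hp : (Specialization.ofEquiv p : X) ∈ S) (g : G) :
    sOut G hS p hp (sIn G hS p hp g) = g := by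
  show (sIn G hS p hp ≫ sOut G hS p hp) g = g
  rw [sIn, sOut, eqToHom_trans, eqToHom_refl]
  rfl

lemma sIn_sOut (G : AddCommGrpCat.{0}) {S : Set X} (hS : IsLocallyClosed S)
    {p : Specialization X} (hp : (Specialization.ofEquiv p : X) ∈ S)
    (a : (suppData G S hS).obj p) :
    sIn G hS p hp (sOut G hS p hp a) = a := by
  show (sOut G hS p hp ≫ sIn G hS p hp) a = a
  rw [sIn, sOut, eqToHom_trans, eqToHom_refl]
  rfl

lemma suppData_map_pos (G : AddCommGrpCat.{0}) {S : Set X} (hS : IsLocallyClosed S)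
    {p q : Specialization X} (h : p ⟶ q)
    (hp : (Specialization.ofEquiv p : X) ∈ S) (hq : (Specialization.ofEquiv q : X) ∈ S) :
    (suppData G S hS).map h = sOut G hS p hp ≫ sIn G hS q hq := by
  simp [suppData, hp, hq, sOut, sIn]
  exact (eqToHom_trans _ _).symm

lemma suppData_map_neg_left (G : AddCommGrpCat.{0}) {S : Set X} (hS : IsLocallyClosed S)
    {p q : Specialization X} (h : p ⟶ q)
    (hp : (Specialization.ofEquiv p : X) ∉ S) :
    (suppData G S hS).map h = 0 := dif_neg hp

lemma suppData_map_neg_right (G : AddCommGrpCat.{0}) {S : Set X} (hS : IsLocallyClosed S)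
    {p q : Specialization X} (h : p ⟶ q)
    (hq : (Specialization.ofEquiv q : X) ∉ S) :
    (suppData G S hS).map h = 0 := by
  show (if hp' : _ then _ else _) = _
  by_cases hp : (Specialization.ofEquiv p : X) ∈ S
  · simp [suppData, hp, hq]; rfl
  · simp [suppData, hp]; rfl

lemma suppData_subsingleton (G : AddCommGrpCat.{0}) {S : Set X} (hS : IsLocallyClosed S)
    {p : Specialization X} (hp : (Specialization.ofEquiv p : X) ∉ S) :
    Subsingleton ((suppData G S hS).obj p) := by
  rw [suppData_obj_eq, if_neg hp]
  exact inferInstanceAs (Subsingleton PUnit)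


lemma mem_closed_of_pt_le {W : Set X} (hW : IsClosed W) {p q : Specialization X} (h : p ≤ q)
    (hq : (Specialization.ofEquiv q : X) ∈ W) : (Specialization.ofEquiv p : X) ∈ W := by
  have hmem : (Specialization.ofEquiv p : X)
      ∈ closure ({(Specialization.ofEquiv q : X)} : Set X) := mem_closure_iff_pt_le.mpr h
  exact closure_minimal (Set.singleton_subset_iff.mpr hq) hW hmem

lemma mem_open_of_pt_le {W : Set X} (hW : IsOpen W) {p q : Specialization X} (h : p ≤ q)
    (hp : (Specialization.ofEquiv p : X) ∈ W) : (Specialization.ofEquiv q : X) ∈ W :=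
  Set.sInter_subset_of_mem (⟨hW, hp⟩ : _ ∧ _) (mem_minOpen_iff.mpr h)

/-! Part 1: closed subsets. -/
variable (G : AddCommGrpCat.{0}) {Z : Set X} (hZ : IsClosed Z) (F : AbData X)

noncomputable def e1toAux (ψ : F ⟶ suppData G Z hZ.isLocallyClosed) :
    DirectSum ↥Z (stalk ((restr Z).obj F)) →+ G :=
  letI := Classical.decEq ↥Z
  DirectSum.toAddMonoid (fun x =>
    ((sOut G hZ.isLocallyClosed (pt (x.1 : X)) x.2).hom).comp
      (ψ.app (pt (x.1 : X))).hom)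

lemma e1toAux_of (ψ : F ⟶ suppData G Z hZ.isLocallyClosed) (x : ↥Z)
    (a : stalk ((restr Z).obj F) x) :
    e1toAux G hZ F ψ (cosecOf ((restr Z).obj F) x a)
      = sOut G hZ.isLocallyClosed (pt (x.1 : X)) x.2 (ψ.app (pt (x.1 : X)) a) := by
  letI := Classical.decEq ↥Z
  simp only [e1toAux, cosecOf, DirectSum.toAddMonoid_of]
  rfl

noncomputable def e1to (ψ : F ⟶ suppData G Z hZ.isLocallyClosed) :
    cosecGrpOn Z F →+ G := by
  refine QuotientAddGroup.lift _ (e1toAux G hZ F ψ) ?_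
  rw [cosecRel, AddSubgroup.closure_le]
  rintro w ⟨x, y, h, a, rfl⟩
  have hX : pt (x : X) ≤ pt (y : X) := (subtype_pt_le_iff x y).mp h
  rw [SetLike.mem_coe, AddMonoidHom.mem_ker, map_sub, e1toAux_of, e1toAux_of]
  refine sub_eq_zero.mpr ?_
  have hnat := naturality_apply ψ (homOfLE hX) a
  rw [suppData_map_pos G hZ.isLocallyClosed (homOfLE hX) x.2 y.2] at hnat
  exact (congrArg (fun t => sOut G hZ.isLocallyClosed (pt (y.1 : X)) y.2 t) hnat.symm).trans
    (sOut_sIn G hZ.isLocallyClosed y.2 _)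

lemma e1to_mk (ψ : F ⟶ suppData G Z hZ.isLocallyClosed) (x : ↥Z)
    (a : stalk ((restr Z).obj F) x) :
    e1to G hZ F ψ (cosecMk ((restr Z).obj F) x a)
      = sOut G hZ.isLocallyClosed (pt (x.1 : X)) x.2 (ψ.app (pt (x.1 : X)) a) :=
  e1toAux_of G hZ F ψ x a

noncomputable def e1app (f : cosecGrpOn Z F →+ G) (p : Specialization X) :
    F.obj p ⟶ (suppData G Z hZ.isLocallyClosed).obj p :=
  if hp : (Specialization.ofEquiv p : X) ∈ Z then
    AddCommGrpCat.ofHom ((sIn G hZ.isLocallyClosed p hp).hom.comp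
      (f.comp (cosecMk ((restr Z).obj F) ⟨Specialization.ofEquiv p, hp⟩)))
  else 0

lemma e1app_pos (f : cosecGrpOn Z F →+ G) (p : Specialization X)
    (hp : (Specialization.ofEquiv p : X) ∈ Z) (a : F.obj p) :
    e1app G hZ F f p a
      = sIn G hZ.isLocallyClosed p hp
          (f (cosecMk ((restr Z).obj F) ⟨Specialization.ofEquiv p, hp⟩ a)) := by
  have key : e1app G hZ F f p = AddCommGrpCat.ofHom ((sIn G hZ.isLocallyClosed p hp).hom.comp
      (f.comp (cosecMk ((restr Z).obj F) ⟨Specialization.ofEquiv p, hp⟩))) := by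
    unfold e1app; exact dif_pos hp
  rw [key]
  rfl

lemma e1app_neg (f : cosecGrpOn Z F →+ G) (p : Specialization X)
    (hp : (Specialization.ofEquiv p : X) ∉ Z) :
    e1app G hZ F f p = 0 := by unfold e1app; exact dif_neg hp

lemma cosecMk_rel (F' : AbData X) {S : Set X} (x y : ↥S) (h : pt x ≤ pt y)
    (a : stalk ((restr S).obj F') x) :
    cosecMk ((restr S).obj F') y (((restr S).obj F').map (homOfLE h) a)
      = cosecMk ((restr S).obj F') x a := by
  have h0 : (QuotientAddGroup.mk' (cosecRel ((restr S).obj F')))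
      (cosecOf ((restr S).obj F') y (((restr S).obj F').map (homOfLE h) a)
        - cosecOf ((restr S).obj F') x a) = 0 :=
    (QuotientAddGroup.eq_zero_iff _).mpr (AddSubgroup.subset_closure ⟨x, y, h, a, rfl⟩)
  rw [map_sub] at h0
  exact sub_eq_zero.mp h0

noncomputable def e1inv (f : cosecGrpOn Z F →+ G) : F ⟶ suppData G Z hZ.isLocallyClosed where
  app p := e1app G hZ F f p
  naturality := by
    intro p q h
    apply AddCommGrpCat.hom_ext; apply AddMonoidHom.ext
    intro a
    simp only [AddCommGrpCat.hom_comp, AddMonoidHom.coe_comp, Function.comp_apply]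
    by_cases hq : (Specialization.ofEquiv q : X) ∈ Z
    · have hp : (Specialization.ofEquiv p : X) ∈ Z := mem_closed_of_pt_le hZ (leOfHom h) hq
      set xZ : ↥Z := ⟨Specialization.ofEquiv p, hp⟩
      set yZ : ↥Z := ⟨Specialization.ofEquiv q, hq⟩
      have hsub : pt xZ ≤ pt yZ := (subtype_pt_le_iff xZ yZ).mpr (leOfHom h)
      have heq : ((restr Z).obj F).map (homOfLE hsub) = F.map h := data_map_eq F _ _
      have happ : ((restr Z).obj F).map (homOfLE hsub) a = F.map h a :=
        congrArg (fun g : ((restr Z).obj F).obj (pt xZ) ⟶ ((restr Z).obj F).obj (pt yZ) => g a)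
          heq
      have hrel : cosecMk ((restr Z).obj F) yZ (F.map h a) = cosecMk ((restr Z).obj F) xZ a :=
        (congrArg (fun t => cosecMk ((restr Z).obj F) yZ t) happ).symm.trans
          (cosecMk_rel F xZ yZ hsub a)
      refine (e1app_pos G hZ F f q hq (F.map h a)).trans ?_
      refine Eq.trans ?_ ((congrArg (fun g : (suppData G Z hZ.isLocallyClosed).obj p
          ⟶ (suppData G Z hZ.isLocallyClosed).obj q => g (e1app G hZ F f p a))
        (suppData_map_pos G hZ.isLocallyClosed h hp hq)).symm)
      refine Eq.trans (congrArg (fun t => sIn G hZ.isLocallyClosed q hq (f t)) hrel) ?_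
      refine Eq.trans ?_ (congrArg (fun t => sIn G hZ.isLocallyClosed q hq
        (sOut G hZ.isLocallyClosed p hp t)) (e1app_pos G hZ F f p hp a).symm)
      exact (congrArg (fun t => sIn G hZ.isLocallyClosed q hq t)
        (sOut_sIn G hZ.isLocallyClosed hp _)).symm
    · rw [e1app_neg G hZ F f q hq, suppData_map_neg_right G hZ.isLocallyClosed h hq]
      rfl

lemma e1_left (ψ : F ⟶ suppData G Z hZ.isLocallyClosed) :
    e1inv G hZ F (e1to G hZ F ψ) = ψ := by
  refine NatTrans.ext (funext fun p => AddCommGrpCat.hom_ext (AddMonoidHom.ext fun a => ?_))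
  show e1app G hZ F (e1to G hZ F ψ) p a = ψ.app p a
  by_cases hp : (Specialization.ofEquiv p : X) ∈ Z
  · refine (e1app_pos G hZ F (e1to G hZ F ψ) p hp a).trans ?_
    refine (congrArg (fun t => sIn G hZ.isLocallyClosed p hp t)
      (e1to_mk G hZ F ψ ⟨Specialization.ofEquiv p, hp⟩ a)).trans ?_
    exact sIn_sOut G hZ.isLocallyClosed hp (ψ.app p a)
  · letI := suppData_subsingleton G hZ.isLocallyClosed hp
    exact Subsingleton.elim _ _

lemma e1_right (f : cosecGrpOn Z F →+ G) : e1to G hZ F (e1inv G hZ F f) = f := by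
  refine cosecHom_ext fun x a => ?_
  refine (e1to_mk G hZ F (e1inv G hZ F f) x a).trans ?_
  refine (congrArg (fun t => sOut G hZ.isLocallyClosed (pt (x.1 : X)) x.2 t)
    (e1app_pos G hZ F f (pt (x.1 : X)) x.2 a)).trans ?_
  exact sOut_sIn G hZ.isLocallyClosed x.2 _

lemma e1_nat (F' : AbData X) (φ : F' ⟶ F) (ψ : F ⟶ suppData G Z hZ.isLocallyClosed) :
    e1to G hZ F' (φ ≫ ψ) = (e1to G hZ F ψ).comp (cosecMapOn Z φ) := by
  refine cosecHom_ext fun x a => ?_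
  refine (e1to_mk G hZ F' (φ ≫ ψ) x a).trans ?_
  refine Eq.trans ((e1to_mk G hZ F ψ x (((restr Z).map φ).app (pt x) a)).symm) ?_
  exact (congrArg (fun t => e1to G hZ F ψ t) (cosecMap_mk ((restr Z).map φ) x a)).symm

/-! Part 2: open subsets. -/
variable {U : Set X} (hU : IsOpen U)

noncomputable def secEv (U : Set X) (F : AbData X) (x : ↥U) :
    secGrpOn U F →+ F.obj (pt (x.1 : X)) where
  toFun u := u.1 x
  map_zero' := rfl
  map_add' _ _ := rfl

noncomputable def e2to (ψ : suppData G U hU.isLocallyClosed ⟶ F) : G →+ secGrpOn U F where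
  toFun g := ⟨fun x => ψ.app (pt (x.1 : X)) (sIn G hU.isLocallyClosed (pt (x.1 : X)) x.2 g), by
    intro x y h
    have hX : pt (x : X) ≤ pt (y : X) := (subtype_pt_le_iff x y).mp h
    have heq : ((restr U).obj F).map (homOfLE h) = F.map (homOfLE hX) := data_map_eq F _ _
    have happ : ((restr U).obj F).map (homOfLE h)
          (ψ.app (pt (x.1 : X)) (sIn G hU.isLocallyClosed (pt (x.1 : X)) x.2 g))
        = F.map (homOfLE hX)
          (ψ.app (pt (x.1 : X)) (sIn G hU.isLocallyClosed (pt (x.1 : X)) x.2 g)) :=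
      congrArg (fun t : ((restr U).obj F).obj (pt x) ⟶ ((restr U).obj F).obj (pt y) =>
        t (ψ.app (pt (x.1 : X)) (sIn G hU.isLocallyClosed (pt (x.1 : X)) x.2 g))) heq
    have hnat := naturality_apply ψ (homOfLE hX)
      (sIn G hU.isLocallyClosed (pt (x.1 : X)) x.2 g)
    rw [suppData_map_pos G hU.isLocallyClosed (homOfLE hX) x.2 y.2] at hnat
    refine happ.trans (hnat.trans ?_)
    exact congrArg (fun t => ψ.app (pt (y.1 : X)) t)
      (congrArg (fun t => sIn G hU.isLocallyClosed (pt (y.1 : X)) y.2 t)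
        (sOut_sIn G hU.isLocallyClosed x.2 g))⟩
  map_zero' := by
    apply Subtype.ext; funext x
    show ψ.app (pt (x.1 : X)) (sIn G hU.isLocallyClosed (pt (x.1 : X)) x.2 0) = 0
    rw [map_zero, map_zero]
  map_add' g g' := by
    apply Subtype.ext; funext x
    show ψ.app (pt (x.1 : X)) (sIn G hU.isLocallyClosed (pt (x.1 : X)) x.2 (g + g')) = _
    rw [map_add, map_add]
    rfl

noncomputable def e2app (f : G →+ secGrpOn U F) (p : Specialization X) :
    (suppData G U hU.isLocallyClosed).obj p ⟶ F.obj p :=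
  if hp : (Specialization.ofEquiv p : X) ∈ U then
    AddCommGrpCat.ofHom (((secEv U F ⟨Specialization.ofEquiv p, hp⟩ : _ →+ _)).comp
      (f.comp (sOut G hU.isLocallyClosed p hp).hom))
  else 0

lemma e2app_pos (f : G →+ secGrpOn U F) (p : Specialization X)
    (hp : (Specialization.ofEquiv p : X) ∈ U) (a : (suppData G U hU.isLocallyClosed).obj p) :
    e2app G F hU f p a
      = secEv U F ⟨Specialization.ofEquiv p, hp⟩ (f (sOut G hU.isLocallyClosed p hp a)) := by
  have key : e2app G F hU f p = AddCommGrpCat.ofHom (((secEv U F ⟨Specialization.ofEquiv p, hp⟩ :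
      _ →+ _)).comp (f.comp (sOut G hU.isLocallyClosed p hp).hom)) := by
    unfold e2app; exact dif_pos hp
  rw [key]
  rfl

lemma e2app_neg (f : G →+ secGrpOn U F) (p : Specialization X)
    (hp : (Specialization.ofEquiv p : X) ∉ U) :
    e2app G F hU f p = 0 := by unfold e2app; exact dif_neg hp

noncomputable def e2inv (f : G →+ secGrpOn U F) : suppData G U hU.isLocallyClosed ⟶ F where
  app p := e2app G F hU f p
  naturality := by
    intro p q h
    apply AddCommGrpCat.hom_ext; apply AddMonoidHom.ext
    intro a
    simp only [AddCommGrpCat.hom_comp, AddMonoidHom.coe_comp, Function.comp_apply]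
    by_cases hp : (Specialization.ofEquiv p : X) ∈ U
    · have hq : (Specialization.ofEquiv q : X) ∈ U := mem_open_of_pt_le hU (leOfHom h) hp
      set xU : ↥U := ⟨Specialization.ofEquiv p, hp⟩
      set yU : ↥U := ⟨Specialization.ofEquiv q, hq⟩
      have hsub : pt xU ≤ pt yU := (subtype_pt_le_iff xU yU).mpr (leOfHom h)
      have heq : ((restr U).obj F).map (homOfLE hsub) = F.map h := data_map_eq F _ _
      set u : secGrpOn U F := f (sOut G hU.isLocallyClosed p hp a) with hu
      -- LHS : e2app f q ((suppData).map h a) = secEv yU u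
      have hmap : (suppData G U hU.isLocallyClosed).map h a
          = sIn G hU.isLocallyClosed q hq (sOut G hU.isLocallyClosed p hp a) :=
        congrArg (fun t : (suppData G U hU.isLocallyClosed).obj p
          ⟶ (suppData G U hU.isLocallyClosed).obj q => t a)
          (suppData_map_pos G hU.isLocallyClosed h hp hq)
      refine Eq.trans (congrArg (fun t => e2app G F hU f q t) hmap) ?_
      refine Eq.trans (e2app_pos G F hU f q hq _) ?_
      refine Eq.trans (congrArg (fun t => secEv U F yU (f t))
        (sOut_sIn G hU.isLocallyClosed hq _)) ?_
      -- now : secEv yU u = F.map h (e2app f p a)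
      have hcompat := u.2 xU yU hsub
      have happ : ((restr U).obj F).map (homOfLE hsub) (u.1 xU) = F.map h (u.1 xU) :=
        congrArg (fun t : ((restr U).obj F).obj (pt xU) ⟶ ((restr U).obj F).obj (pt yU) =>
          t (u.1 xU)) heq
      refine Eq.trans (happ.symm.trans hcompat).symm ?_
      exact (congrArg (fun t => F.map h t) (e2app_pos G F hU f p hp a)).symm
    · have ha : a = 0 := by
        letI := suppData_subsingleton G hU.isLocallyClosed hp
        exact Subsingleton.elim _ _
      rw [ha]
      simp only [map_zero]

lemma e2_left (ψ : suppData G U hU.isLocallyClosed ⟶ F) :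
    e2inv G F hU (e2to G F hU ψ) = ψ := by
  refine NatTrans.ext (funext fun p => AddCommGrpCat.hom_ext (AddMonoidHom.ext fun a => ?_))
  show e2app G F hU (e2to G F hU ψ) p a = ψ.app p a
  by_cases hp : (Specialization.ofEquiv p : X) ∈ U
  · refine (e2app_pos G F hU (e2to G F hU ψ) p hp a).trans ?_
    exact congrArg (fun t => ψ.app p t) (sIn_sOut G hU.isLocallyClosed hp a)
  · have ha : a = 0 := by
      letI := suppData_subsingleton G hU.isLocallyClosed hp
      exact Subsingleton.elim _ _
    rw [ha, map_zero, map_zero]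

lemma e2_right (f : G →+ secGrpOn U F) : e2to G F hU (e2inv G F hU f) = f := by
  refine AddMonoidHom.ext fun g => ?_
  apply Subtype.ext; funext x
  show e2app G F hU f (pt (x.1 : X)) (sIn G hU.isLocallyClosed (pt (x.1 : X)) x.2 g)
    = (f g).1 x
  refine (e2app_pos G F hU f (pt (x.1 : X)) x.2 _).trans ?_
  exact congrArg (fun t => secEv U F x (f t)) (sOut_sIn G hU.isLocallyClosed x.2 g)

lemma e2_nat (F' : AbData X) (φ : F ⟶ F') (ψ : suppData G U hU.isLocallyClosed ⟶ F) :
    e2to G F' hU (ψ ≫ φ) = (secMapOn U φ).comp (e2to G F hU ψ) := by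
  refine AddMonoidHom.ext fun g => ?_
  apply Subtype.ext; funext x
  rfl

end proof15

/-- **Statement 15.** Let `X` be a finite space, `F` an abelian data on `X` and `G` an abelian
group. (1) For every closed `Z ⊆ X`, `Hom(F, G_Z) ≅ Hom(L(Z,F), G)` naturally in `F`.
(2) For every open `U ⊆ X`, `Hom(G_U, F) ≅ Hom(G, Γ(U,F))` naturally in `F`. -/
theorem statement15 {X : Type} [TopologicalSpace X] [Finite X] (G : AddCommGrpCat.{0}) :
    (∀ (Z : Set X) (hZ : IsClosed Z),
      ∃ e : ∀ F : AbData X, (F ⟶ suppData G Z hZ.isLocallyClosed) ≃ (cosecGrpOn Z F →+ G),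
        ∀ (F F' : AbData X) (φ : F' ⟶ F) (ψ : F ⟶ suppData G Z hZ.isLocallyClosed),
          e F' (φ ≫ ψ) = (e F ψ).comp (cosecMapOn Z φ)) ∧
    (∀ (U : Set X) (hU : IsOpen U),
      ∃ e : ∀ F : AbData X, (suppData G U hU.isLocallyClosed ⟶ F) ≃ (G →+ secGrpOn U F),
        ∀ (F F' : AbData X) (φ : F ⟶ F') (ψ : suppData G U hU.isLocallyClosed ⟶ F),
          e F' (ψ ≫ φ) = (secMapOn U φ).comp (e F ψ)) := by
  constructor
  · intro Z hZ
    exact ⟨fun F => ⟨e1to G hZ F, e1inv G hZ F, e1_left G hZ F, e1_right G hZ F⟩,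
      fun F F' φ ψ => e1_nat G hZ F F' φ ψ⟩
  · intro U hU
    exact ⟨fun F => ⟨e2to G F hU, e2inv G F hU, e2_left G F hU, e2_right G F hU⟩,
      fun F F' φ ψ => e2_nat G F hU F' φ ψ⟩
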